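/- (a) For any 𝒱-measurable h ∈ L²(P) such that hQ is integrable and all displayed quantities lie in L²(P), the element E[h | ℋ] − E[h | 𝒱₋] − E[hQ | 𝒱₋]·W•·ε belongs to Γ̃₄ and its difference from h is orthogonal in L²(P) to every element of Γ̃₄; that is, it is the orthogonal projection of h onto Γ̃₄. (b) If h ∈ L²(P) is 𝒱₋-measurable, then h is orthogonal to every element of Γ̃₄, i.e., its orthogonal projection onto Γ̃₄ is 0. -/

import Mathlib

open MeasureTheory

variable {Ω : Type*}

/-- `W := (E[σ² | 𝒱])⁻¹`. -/
noncomputable def Wfun {m0 : MeasurableSpace Ω} (μ : Measure Ω) (mV : MeasurableSpace Ω)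
    (σ : Ω → ℝ) : Ω → ℝ :=
  fun ω => ((μ[(fun ω' => (σ ω')^2)|mV]) ω)⁻¹

/-- `T := E[W | ℋ]`. -/
noncomputable def Tfun {m0 : MeasurableSpace Ω} (μ : Measure Ω)
    (mV mH : MeasurableSpace Ω) (σ : Ω → ℝ) : Ω → ℝ :=
  μ[Wfun μ mV σ|mH]

/-- `T• := E[T⁻¹ | 𝒱₋]`. -/
noncomputable def Tbul {m0 : MeasurableSpace Ω} (μ : Measure Ω)
    (mV mH mVm : MeasurableSpace Ω) (σ : Ω → ℝ) : Ω → ℝ :=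
  μ[(fun ω => (Tfun μ mV mH σ ω)⁻¹)|mVm]

/-- `ε := T⁻¹·W·σ + Q`. -/
noncomputable def epsFun {m0 : MeasurableSpace Ω} (μ : Measure Ω)
    (mV mH : MeasurableSpace Ω) (σ Q : Ω → ℝ) : Ω → ℝ :=
  fun ω => (Tfun μ mV mH σ ω)⁻¹ * Wfun μ mV σ ω * σ ω + Q ω

/-- `W• := (E[ε² | 𝒱₋])⁻¹`. -/
noncomputable def Wbul {m0 : MeasurableSpace Ω} (μ : Measure Ω)
    (mV mH mVm : MeasurableSpace Ω) (σ Q : Ω → ℝ) : Ω → ℝ :=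
  fun ω => ((μ[(fun ω' => (epsFun μ mV mH σ Q ω')^2)|mVm]) ω)⁻¹

/-- `σ' := T⁻¹·W·σ`. -/
noncomputable def sigP {m0 : MeasurableSpace Ω} (μ : Measure Ω)
    (mV mH : MeasurableSpace Ω) (σ : Ω → ℝ) : Ω → ℝ :=
  fun ω => (Tfun μ mV mH σ ω)⁻¹ * Wfun μ mV σ ω * σ ω

section ProjAuxInline
section ProjAux

variable {m m0 : MeasurableSpace Ω} {μ : Measure Ω}

/-- Product of two L² functions is integrable. -/
lemma intMulL2' {f g : Ω → ℝ} (hf : MemLp f 2 μ) (hg : MemLp g 2 μ) :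
    Integrable (fun ω => f ω * g ω) μ := by
  have hint : Integrable (fun ω => ((f ω) ^ 2 + (g ω) ^ 2) / 2) μ :=
    (hf.integrable_sq.add hg.integrable_sq).div_const 2
  refine hint.mono' (hf.aestronglyMeasurable.mul hg.aestronglyMeasurable) ?_
  refine Filter.Eventually.of_forall fun ω => ?_
  have : |f ω * g ω| ≤ (f ω ^ 2 + g ω ^ 2) / 2 := by
    rw [abs_mul]
    nlinarith [sq_nonneg (|f ω| - |g ω|), sq_abs (f ω), sq_abs (g ω),
      abs_nonneg (f ω), abs_nonneg (g ω)]
  simpa [Real.norm_eq_abs, abs_mul] using this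

/-- Pull-out property of conditional expectation, pointwise-product form. -/
lemma condexpMulLeft {φ ψ : Ω → ℝ} (hφ : StronglyMeasurable[m] φ)
    (hint : Integrable (fun ω => φ ω * ψ ω) μ) (hψ : Integrable ψ μ) :
    μ[(fun ω => φ ω * ψ ω)|m] =ᵐ[μ] fun ω => φ ω * (μ[ψ|m]) ω :=
  condExp_mul_of_stronglyMeasurable_left hφ hint hψ


lemma condexpAddPt {f g : Ω → ℝ} (hf : Integrable f μ) (hg : Integrable g μ) :
    μ[(fun ω => f ω + g ω)|m] =ᵐ[μ] fun ω => (μ[f|m]) ω + (μ[g|m]) ω := by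
  have h1 : (fun ω => f ω + g ω) =ᵐ[μ] f + g := Filter.Eventually.of_forall fun ω => rfl
  refine (condExp_congr_ae h1).trans ((condExp_add hf hg m).trans ?_)
  exact Filter.Eventually.of_forall fun ω => rfl

lemma condexpSubPt {f g : Ω → ℝ} (hf : Integrable f μ) (hg : Integrable g μ) :
    μ[(fun ω => f ω - g ω)|m] =ᵐ[μ] fun ω => (μ[f|m]) ω - (μ[g|m]) ω := by
  have h1 : (fun ω => f ω - g ω) =ᵐ[μ] f - g := Filter.Eventually.of_forall fun ω => rfl
  refine (condExp_congr_ae h1).trans ((condExp_sub hf hg m).trans ?_)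
  exact Filter.Eventually.of_forall fun ω => rfl

lemma condexpZeroOfAeZero {f : Ω → ℝ} (hc : f =ᵐ[μ] 0) :
    μ[f|m] =ᵐ[μ] 0 :=
  (condExp_congr_ae hc).trans (by rw [condExp_zero])

lemma condexpMulZero {φ ψ : Ω → ℝ} (hφ : StronglyMeasurable[m] φ)
    (hint : Integrable (fun ω => φ ω * ψ ω) μ) (hψ : Integrable ψ μ)
    (hcond : μ[ψ|m] =ᵐ[μ] 0) :
    μ[(fun ω => φ ω * ψ ω)|m] =ᵐ[μ] 0 := by
  refine (condexpMulLeft hφ hint hψ).trans ?_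
  filter_upwards [hcond] with ω hc
  simp [hc]

lemma towerZero {m1 m2 : MeasurableSpace Ω} (h12 : m1 ≤ m2) (h2 : m2 ≤ m0)
    [SigmaFinite (μ.trim h2)] {f : Ω → ℝ} (hf : μ[f|m2] =ᵐ[μ] 0) :
    μ[f|m1] =ᵐ[μ] 0 :=
  (condExp_condExp_of_le h12 h2).symm.trans (condexpZeroOfAeZero hf)

lemma integralMulCondexp (hm : m ≤ m0) [IsProbabilityMeasure μ]
    {φ ψ : Ω → ℝ}
    (hφ : StronglyMeasurable[m] φ) (hint : Integrable (fun ω => φ ω * ψ ω) μ)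
    (hψ : Integrable ψ μ) :
    ∫ ω, φ ω * ψ ω ∂μ = ∫ ω, φ ω * (μ[ψ|m]) ω ∂μ := by
  rw [← integral_condExp hm (f := fun ω => φ ω * ψ ω)]
  exact integral_congr_ae (condexpMulLeft hφ hint hψ)

lemma integralMulZero' (hm : m ≤ m0) [IsProbabilityMeasure μ]
    {φ ψ : Ω → ℝ}
    (hφ : StronglyMeasurable[m] φ) (hint : Integrable (fun ω => φ ω * ψ ω) μ)
    (hψ : Integrable ψ μ) (hcond : μ[ψ|m] =ᵐ[μ] 0) :
    ∫ ω, φ ω * ψ ω ∂μ = 0 := by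
  rw [integralMulCondexp hm hφ hint hψ]
  have hz : (fun ω => φ ω * (μ[ψ|m]) ω) =ᵐ[μ] 0 := by
    filter_upwards [hcond] with ω hc
    simp [hc]
  rw [integral_congr_ae hz]
  simp

/-- The conditional expectation of an L² function is in L². -/
lemma memL2Condexp (hm : m ≤ m0) [IsFiniteMeasure μ] {f : Ω → ℝ}
    (hf : MemLp f 2 μ) :
    MemLp (μ[f|m]) 2 μ := by
  have hfi : Integrable f μ := hf.integrable one_le_two
  have hae : ((condExpL2 ℝ ℝ hm (hf.toLp f) : lpMeas ℝ ℝ m 2 μ) : Ω → ℝ) =ᵐ[μ] μ[f|m] := by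
    refine ae_eq_condExp_of_forall_setIntegral_eq hm hfi ?_ ?_ ?_
    · intro s _ _
      exact ((Lp.memLp _).integrable one_le_two).integrableOn
    · intro s hs hμs
      rw [integral_condExpL2_eq hm (hf.toLp f) hs hμs.ne]
      exact setIntegral_congr_ae (hm s hs) ((hf.coeFn_toLp).mono fun _ h _ => h)
    · exact lpMeas.aestronglyMeasurable _
  exact (Lp.memLp _).ae_eq hae

/-- Monotone-convergence criterion for membership in L² via truncations. -/
lemma memL2OfTrunc' {u : Ω → ℝ} (hu : AEStronglyMeasurable u μ) (S : ℕ → Set Ω)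
    (hSmeas : ∀ n, MeasurableSet (S n)) (hmono : Monotone S)
    (hcov : ∀ ω, ∃ n, ω ∈ S n) (K : ℝ)
    (hint : ∀ n, Integrable (fun ω => ((S n).indicator u ω) ^ 2) μ)
    (hbd : ∀ n, ∫ ω, ((S n).indicator u ω) ^ 2 ∂μ ≤ K) :
    MemLp u 2 μ := by
  refine (memLp_two_iff_integrable_sq hu).mpr ?_
  have husq : AEStronglyMeasurable (fun ω => u ω ^ 2) μ :=
    (hu.aemeasurable.pow_const 2).aestronglyMeasurable
  refine ⟨husq, ?_⟩
  have key : ∀ n, ∫⁻ ω, ENNReal.ofReal (((S n).indicator u ω) ^ 2) ∂μ ≤ ENNReal.ofReal K := by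
    intro n
    rw [← ofReal_integral_eq_lintegral_ofReal (hint n)
      (Filter.Eventually.of_forall fun ω => sq_nonneg _)]
    exact ENNReal.ofReal_le_ofReal (hbd n)
  have hsup : ∀ ω, (⨆ n, ENNReal.ofReal (((S n).indicator u ω) ^ 2))
      = ENNReal.ofReal (u ω ^ 2) := by
    intro ω
    obtain ⟨n₀, hn₀⟩ := hcov ω
    apply le_antisymm
    · refine iSup_le fun n => ?_
      by_cases hω : ω ∈ S n
      · rw [Set.indicator_of_mem hω]
      · rw [Set.indicator_of_notMem hω]
        simp
    · refine le_iSup_of_le n₀ ?_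
      rw [Set.indicator_of_mem hn₀]
  have hmeas : ∀ n, AEMeasurable (fun ω => ENNReal.ofReal (((S n).indicator u ω) ^ 2)) μ := by
    intro n
    exact (((hu.aemeasurable.indicator (hSmeas n)).pow_const 2)).ennreal_ofReal
  have hmono' : ∀ᵐ ω ∂μ, Monotone fun n => ENNReal.ofReal (((S n).indicator u ω) ^ 2) := by
    refine Filter.Eventually.of_forall fun ω => ?_
    intro a b hab
    simp only []
    by_cases hω : ω ∈ S a
    · rw [Set.indicator_of_mem hω, Set.indicator_of_mem (hmono hab hω)]
    · rw [Set.indicator_of_notMem hω]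
      simp
  have hlin : ∫⁻ ω, ‖u ω ^ 2‖ₑ ∂μ = ∫⁻ ω, ENNReal.ofReal (u ω ^ 2) ∂μ := by
    refine lintegral_congr fun ω => ?_
    rw [← Real.enorm_eq_ofReal (sq_nonneg _)]
  rw [HasFiniteIntegral, hlin]
  calc ∫⁻ ω, ENNReal.ofReal (u ω ^ 2) ∂μ
      = ∫⁻ ω, ⨆ n, ENNReal.ofReal (((S n).indicator u ω) ^ 2) ∂μ := by
        refine lintegral_congr fun ω => (hsup ω).symm
    _ = ⨆ n, ∫⁻ ω, ENNReal.ofReal (((S n).indicator u ω) ^ 2) ∂μ := lintegral_iSup' hmeas hmono'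
    _ ≤ ENNReal.ofReal K := iSup_le key
    _ < ⊤ := ENNReal.ofReal_lt_top

/-- Rigidity: if `A` is `ℋ`-measurable, `c` is `ℋ`-measurable, `E[σ'|ℋ] = 0` with
`σ' ∈ L²`, and `A - c·σ' ∈ L²`, then both `A` and `c·σ'` are in `L²`. -/
lemma gammaSplit [IsProbabilityMeasure μ] {mH : MeasurableSpace Ω} (hH : mH ≤ m0)
    {σ' A c : Ω → ℝ} (hσ'2 : MemLp σ' 2 μ) (hσ'H : μ[σ'|mH] =ᵐ[μ] 0)
    (hA : StronglyMeasurable[mH] A) (hc : StronglyMeasurable[mH] c)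
    (hf2 : MemLp (fun ω => A ω - c ω * σ' ω) 2 μ) :
    MemLp A 2 μ ∧ MemLp (fun ω => c ω * σ' ω) 2 μ := by
  have hAm0 : AEStronglyMeasurable[m0] A μ := (hA.mono hH).aestronglyMeasurable
  have hcm0 : AEStronglyMeasurable[m0] c μ := (hc.mono hH).aestronglyMeasurable
  have hcs : AEStronglyMeasurable[m0] (fun ω => c ω * σ' ω) μ :=
    hcm0.mul hσ'2.aestronglyMeasurable
  set S : ℕ → Set Ω := fun n => {ω | |c ω| ≤ (n : ℝ)} with hS_def
  have hSH : ∀ n, MeasurableSet[mH] (S n) := fun n =>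
    measurableSet_le hc.measurable.abs measurable_const
  have hS0 : ∀ n, MeasurableSet[m0] (S n) := fun n => hH _ (hSH n)
  have hmem : ∀ n ω, ω ∈ S n ↔ |c ω| ≤ (n : ℝ) := fun n ω => by rw [hS_def]; rfl
  have hmono : Monotone S := fun a b hab ω hω =>
    (hmem b ω).mpr (le_trans ((hmem a ω).mp hω) (Nat.cast_le.mpr hab))
  have hcov : ∀ ω, ∃ n, ω ∈ S n := fun ω =>
    (exists_nat_ge |c ω|).imp fun n hn => (hmem n ω).mpr hn
  have hAfv : ∀ n ω, (S n).indicator A ω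
      = (S n).indicator (fun ω' => A ω' - c ω' * σ' ω') ω
        + (S n).indicator (fun ω' => c ω' * σ' ω') ω := by
    intro n ω
    by_cases hω : ω ∈ S n
    · simp only [Set.indicator_of_mem hω]; ring
    · simp only [Set.indicator_of_notMem hω, add_zero]
  have hvn2 : ∀ n, MemLp ((S n).indicator (fun ω => c ω * σ' ω)) 2 μ := by
    intro n
    refine MemLp.of_le (hσ'2.const_mul (n : ℝ)) (hcs.indicator (hS0 n)) ?_
    refine Filter.Eventually.of_forall fun ω => ?_
    by_cases hω : ω ∈ S n
    · rw [Set.indicator_of_mem hω]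
      simp only [Real.norm_eq_abs, abs_mul]
      have h1 : |c ω| ≤ (n : ℝ) := (hmem n ω).mp hω
      have h2 : (n:ℝ) = |(n:ℝ)| := (abs_of_nonneg (Nat.cast_nonneg n)).symm
      calc |c ω| * |σ' ω| ≤ (n:ℝ) * |σ' ω| :=
            mul_le_mul_of_nonneg_right h1 (abs_nonneg _)
        _ = |(n:ℝ)| * |σ' ω| := by rw [← h2]
    · rw [Set.indicator_of_notMem hω]
      simp only [norm_zero]
      positivity
  have hun2 : ∀ n, MemLp ((S n).indicator A) 2 μ := by
    intro n
    refine (((hf2.indicator (hS0 n)).add (hvn2 n)).ae_eq ?_)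
    refine Filter.Eventually.of_forall fun ω => ?_
    exact (hAfv n ω).symm
  have hcross : ∀ n, ∫ ω, (S n).indicator A ω * (S n).indicator (fun ω' => c ω' * σ' ω') ω ∂μ
      = 0 := by
    intro n
    have hpt : ∀ ω, (S n).indicator A ω * (S n).indicator (fun ω' => c ω' * σ' ω') ω
        = (S n).indicator (fun ω' => A ω' * c ω') ω * σ' ω := by
      intro ω
      by_cases hω : ω ∈ S n
      · simp only [Set.indicator_of_mem hω]; ring
      · simp only [Set.indicator_of_notMem hω, zero_mul, mul_zero]
    have hφ : StronglyMeasurable[mH] ((S n).indicator (fun ω' => A ω' * c ω')) :=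
      (hA.mul hc).indicator (hSH n)
    have hint : Integrable (fun ω => (S n).indicator (fun ω' => A ω' * c ω') ω * σ' ω) μ :=
      (intMulL2' (hun2 n) (hvn2 n)).congr (Filter.Eventually.of_forall fun ω => hpt ω)
    rw [integral_congr_ae (Filter.Eventually.of_forall hpt)]
    exact integralMulZero' hH hφ hint (hσ'2.integrable one_le_two) hσ'H
  have hKint : Integrable (fun ω => (A ω - c ω * σ' ω) ^ 2) μ := hf2.integrable_sq
  set K : ℝ := ∫ ω, (A ω - c ω * σ' ω) ^ 2 ∂μ with hK_def
  have hboth : ∀ n, ∫ ω, ((S n).indicator A ω) ^ 2 ∂μ ≤ K ∧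
      ∫ ω, ((S n).indicator (fun ω' => c ω' * σ' ω') ω) ^ 2 ∂μ ≤ K := by
    intro n
    have e1 := (hun2 n).integrable_sq
    have e2 := (hvn2 n).integrable_sq
    have e3 := intMulL2' (hun2 n) (hvn2 n)
    have hpt2 : ∀ ω, ((S n).indicator (fun ω' => A ω' - c ω' * σ' ω') ω) ^ 2
        = ((S n).indicator A ω) ^ 2 + ((S n).indicator (fun ω' => c ω' * σ' ω') ω) ^ 2
          - 2 * ((S n).indicator A ω * (S n).indicator (fun ω' => c ω' * σ' ω') ω) := by
      intro ω
      by_cases hω : ω ∈ S n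
      · simp only [Set.indicator_of_mem hω]; ring
      · simp only [Set.indicator_of_notMem hω]; ring
    have hexp : ∫ ω, ((S n).indicator (fun ω' => A ω' - c ω' * σ' ω') ω) ^ 2 ∂μ
        = ∫ ω, ((S n).indicator A ω) ^ 2 ∂μ
          + ∫ ω, ((S n).indicator (fun ω' => c ω' * σ' ω') ω) ^ 2 ∂μ := by
      have e12 : Integrable (fun ω => ((S n).indicator A ω) ^ 2
          + ((S n).indicator (fun ω' => c ω' * σ' ω') ω) ^ 2) μ := e1.add e2
      have e3' : Integrable (fun ω => 2 * ((S n).indicator A ω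
          * (S n).indicator (fun ω' => c ω' * σ' ω') ω)) μ := e3.const_mul 2
      rw [integral_congr_ae (Filter.Eventually.of_forall hpt2),
        integral_sub e12 e3', integral_add e1 e2,
        integral_const_mul, hcross n]
      ring
    have hle : ∫ ω, ((S n).indicator (fun ω' => A ω' - c ω' * σ' ω') ω) ^ 2 ∂μ ≤ K := by
      have hpt3 : ∀ ω, ((S n).indicator (fun ω' => A ω' - c ω' * σ' ω') ω) ^ 2
          = (S n).indicator (fun ω' => (A ω' - c ω' * σ' ω') ^ 2) ω := by
        intro ω
        by_cases hω : ω ∈ S n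
        · simp only [Set.indicator_of_mem hω]
        · simp only [Set.indicator_of_notMem hω]; ring
      letI : MeasurableSpace Ω := m0
      rw [integral_congr_ae (Filter.Eventually.of_forall hpt3),
        integral_indicator (μ := μ) (hS0 n)]
      exact setIntegral_le_integral hKint
        (Filter.Eventually.of_forall fun ω => sq_nonneg _)
    have hnn1 : 0 ≤ ∫ ω, ((S n).indicator A ω) ^ 2 ∂μ :=
      integral_nonneg fun ω => sq_nonneg _
    have hnn2 : 0 ≤ ∫ ω, ((S n).indicator (fun ω' => c ω' * σ' ω') ω) ^ 2 ∂μ :=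
      integral_nonneg fun ω => sq_nonneg _
    constructor <;> linarith
  exact ⟨memL2OfTrunc' hAm0 S hS0 hmono hcov K (fun n => (hun2 n).integrable_sq)
      (fun n => (hboth n).1),
    memL2OfTrunc' hcs S hS0 hmono hcov K (fun n => (hvn2 n).integrable_sq)
      (fun n => (hboth n).2)⟩

end ProjAux
end ProjAuxInline



/-- `e := E[hQ|𝒱₋]·W•`. -/
noncomputable def eCoef {m0 : MeasurableSpace Ω} (μ : Measure Ω)
    (mV mH mVm : MeasurableSpace Ω) (σ Q h : Ω → ℝ) : Ω → ℝ :=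
  fun ω => (μ[(fun ω' => h ω' * Q ω')|mVm]) ω * Wbul μ mV mH mVm σ Q ω

/-- `A₀ := E[h|ℋ] − E[h|𝒱₋] − e·Q`. -/
noncomputable def A0fun {m0 : MeasurableSpace Ω} (μ : Measure Ω)
    (mV mH mVm : MeasurableSpace Ω) (σ Q h : Ω → ℝ) : Ω → ℝ :=
  fun ω => (μ[h|mH]) ω - (μ[h|mVm]) ω - eCoef μ mV mH mVm σ Q h ω * Q ω


/-- `Γ̃₄ = {A• − E[Q·A• | 𝒱₋]·(T•)⁻¹·T⁻¹·W·σ : A• ℋ-measurable, E[A• | 𝒱₋] = 0 a.s.,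
the element lying in L²}`. -/
def GammaTilde4 {m0 : MeasurableSpace Ω} (μ : Measure Ω)
    (mV mH mVm : MeasurableSpace Ω) (σ Q : Ω → ℝ) : Set (Ω → ℝ) :=
  {f | ∃ A : Ω → ℝ, StronglyMeasurable[mH] A ∧ μ[A|mVm] =ᵐ[μ] 0 ∧
    f = (fun ω => A ω - (μ[(fun ω' => Q ω' * A ω')|mVm]) ω *
      (Tbul μ mV mH mVm σ ω)⁻¹ * (Tfun μ mV mH σ ω)⁻¹ * Wfun μ mV σ ω * σ ω) ∧
    MemLp f 2 μ}

/-- The candidate projection `E[h | ℋ] − E[h | 𝒱₋] − E[hQ | 𝒱₋]·W•·ε`. -/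
noncomputable def projGamma4 {m0 : MeasurableSpace Ω} (μ : Measure Ω)
    (mV mH mVm : MeasurableSpace Ω) (σ Q h : Ω → ℝ) : Ω → ℝ :=
  fun ω => (μ[h|mH]) ω - (μ[h|mVm]) ω -
    (μ[(fun ω' => h ω' * Q ω')|mVm]) ω * Wbul μ mV mH mVm σ Q ω * epsFun μ mV mH σ Q ω

/-- projection onto `Γ̃₄`.
(a) For any 𝒱-measurable `h ∈ L²(P)` with `hQ` integrable (all displayed quantities in
`L²`), `E[h | ℋ] − E[h | 𝒱₋] − E[hQ | 𝒱₋]·W•·ε` belongs to `Γ̃₄` and its difference from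
`h` is orthogonal in `L²(P)` to every element of `Γ̃₄`; i.e. it is the orthogonal
projection of `h` onto `Γ̃₄`.
(b) If `h' ∈ L²(P)` is 𝒱₋-measurable, then `h'` is orthogonal to every element of `Γ̃₄`. -/
theorem projection_onto_GammaTilde4
    {m0 : MeasurableSpace Ω} (μ : Measure Ω) [IsProbabilityMeasure μ]
    (mVm mH mV : MeasurableSpace Ω)
    (hVmH : mVm ≤ mH) (hHV : mH ≤ mV) (hV : mV ≤ m0)
    (σ : Ω → ℝ) (hσ2 : MemLp σ 2 μ)
    (hσcond : μ[σ|mV] =ᵐ[μ] 0)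
    (hσvar : ∀ᵐ ω ∂μ, 0 < (μ[(fun ω' => (σ ω')^2)|mV]) ω)
    (hWint : Integrable (Wfun μ mV σ) μ)
    (hTpos : ∀ᵐ ω ∂μ, 0 < Tfun μ mV mH σ ω)
    (hTinvInt : Integrable (fun ω => (Tfun μ mV mH σ ω)⁻¹) μ)
    (hTbpos : ∀ᵐ ω ∂μ, 0 < Tbul μ mV mH mVm σ ω)
    (Q : Ω → ℝ) (hQmeas : StronglyMeasurable[mH] Q) (hQ2 : MemLp Q 2 μ)
    (hQcond : μ[Q|mVm] =ᵐ[μ] 0)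
    (hε2 : MemLp (epsFun μ mV mH σ Q) 2 μ)
    (hWbpos : ∀ᵐ ω ∂μ, 0 < (μ[(fun ω' => (epsFun μ mV mH σ Q ω')^2)|mVm]) ω)
    (h : Ω → ℝ) (hhmeas : StronglyMeasurable[mV] h) (hh2 : MemLp h 2 μ)
    (hhQInt : Integrable (fun ω => h ω * Q ω) μ)
    (hprojL2 : MemLp (projGamma4 μ mV mH mVm σ Q h) 2 μ) :
    (∃ g ∈ GammaTilde4 μ mV mH mVm σ Q, projGamma4 μ mV mH mVm σ Q h =ᵐ[μ] g) ∧
    (∀ f ∈ GammaTilde4 μ mV mH mVm σ Q,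
      ∫ ω, (h ω - projGamma4 μ mV mH mVm σ Q h ω) * f ω ∂μ = 0) ∧
    (∀ h' : Ω → ℝ, StronglyMeasurable[mVm] h' → MemLp h' 2 μ →
      ∀ f ∈ GammaTilde4 μ mV mH mVm σ Q, ∫ ω, h' ω * f ω ∂μ = 0) := by
  have hH0 : mH ≤ m0 := hHV.trans hV
  have hVm0 : mVm ≤ m0 := hVmH.trans hH0
  -- measurability
  have hTm : StronglyMeasurable[mH] (Tfun μ mV mH σ) := stronglyMeasurable_condExp
  have hWmV : Measurable[mV] (Wfun μ mV σ) := stronglyMeasurable_condExp.measurable.inv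
  have hTbm : StronglyMeasurable[mVm] (Tbul μ mV mH mVm σ) := stronglyMeasurable_condExp
  have hWbm : Measurable[mVm] (Wbul μ mV mH mVm σ Q) :=
    stronglyMeasurable_condExp.measurable.inv
  have hTW : StronglyMeasurable[mV] (fun ω => (Tfun μ mV mH σ ω)⁻¹ * Wfun μ mV σ ω) :=
    (((hTm.mono hHV).measurable.inv).mul hWmV).stronglyMeasurable
  -- integrability
  have hσ'2 : MemLp (sigP μ mV mH σ) 2 μ := by
    refine (hε2.sub hQ2).ae_eq (Filter.Eventually.of_forall fun ω => ?_)
    show epsFun μ mV mH σ Q ω - Q ω = sigP μ mV mH σ ω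
    simp [epsFun, sigP]
  have iσ : Integrable σ μ := hσ2.integrable one_le_two
  have iQ : Integrable Q μ := hQ2.integrable one_le_two
  have iε : Integrable (epsFun μ mV mH σ Q) μ := hε2.integrable one_le_two
  have iσ' : Integrable (sigP μ mV mH σ) μ := hσ'2.integrable one_le_two
  have iσsq : Integrable (fun ω => σ ω ^ 2) μ := hσ2.integrable_sq
  have iQsq : Integrable (fun ω => Q ω ^ 2) μ := hQ2.integrable_sq
  have iσ'sq : Integrable (fun ω => sigP μ mV mH σ ω ^ 2) μ := hσ'2.integrable_sq
  have iQσ' : Integrable (fun ω => Q ω * sigP μ mV mH σ ω) μ := intMulL2' hQ2 hσ'2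
  -- conditional expectation of σ' vanishes
  have hσ'V : μ[sigP μ mV mH σ|mV] =ᵐ[μ] 0 := by
    have h1 : μ[sigP μ mV mH σ|mV] =ᵐ[μ]
        fun ω => ((Tfun μ mV mH σ ω)⁻¹ * Wfun μ mV σ ω) * (μ[σ|mV]) ω :=
      condexpMulLeft hTW iσ' iσ
    refine h1.trans ?_
    filter_upwards [hσcond] with ω hc
    simp [hc]
  have hσ'H : μ[sigP μ mV mH σ|mH] =ᵐ[μ] 0 := towerZero hHV hV hσ'V
  have hσ'Vm : μ[sigP μ mV mH σ|mVm] =ᵐ[μ] 0 := towerZero (hVmH.trans hHV) hV hσ'V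
  have hQσ'H : μ[(fun ω => Q ω * sigP μ mV mH σ ω)|mH] =ᵐ[μ] 0 :=
    condexpMulZero hQmeas iQσ' iσ' hσ'H
  have hQσ'Vm : μ[(fun ω => Q ω * sigP μ mV mH σ ω)|mVm] =ᵐ[μ] 0 :=
    towerZero hVmH hH0 hQσ'H
  -- conditional second moment of σ'
  have hσ'sqV : μ[(fun ω => sigP μ mV mH σ ω ^ 2)|mV] =ᵐ[μ]
      fun ω => ((Tfun μ mV mH σ ω)⁻¹) ^ 2 * Wfun μ mV σ ω := by
    have hφ : StronglyMeasurable[mV]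
        (fun ω => ((Tfun μ mV mH σ ω)⁻¹ * Wfun μ mV σ ω) ^ 2) :=
      (hTW.measurable.pow_const 2).stronglyMeasurable
    have hint : Integrable
        (fun ω => ((Tfun μ mV mH σ ω)⁻¹ * Wfun μ mV σ ω) ^ 2 * σ ω ^ 2) μ :=
      iσ'sq.congr (Filter.Eventually.of_forall fun ω => by simp only [sigP]; ring)
    have h1 : μ[(fun ω => sigP μ mV mH σ ω ^ 2)|mV] =ᵐ[μ]
        μ[(fun ω => ((Tfun μ mV mH σ ω)⁻¹ * Wfun μ mV σ ω) ^ 2 * σ ω ^ 2)|mV] :=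
      condExp_congr_ae (Filter.Eventually.of_forall fun ω => by simp only [sigP]; ring)
    have h2 := condexpMulLeft hφ hint iσsq
    refine h1.trans (h2.trans ?_)
    filter_upwards [hσvar] with ω hv
    have hW : Wfun μ mV σ ω = ((μ[(fun ω' => σ ω' ^ 2)|mV]) ω)⁻¹ := rfl
    rw [hW]
    have hvne : (μ[(fun ω' => σ ω' ^ 2)|mV]) ω ≠ 0 := ne_of_gt hv
    set t := Tfun μ mV mH σ ω
    set v := (μ[(fun ω' => σ ω' ^ 2)|mV]) ω
    calc (t⁻¹ * v⁻¹) ^ 2 * v = t⁻¹ ^ 2 * (v⁻¹ ^ 2 * v) := by ring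
      _ = t⁻¹ ^ 2 * v⁻¹ := by
          rw [pow_two v⁻¹, mul_assoc, inv_mul_cancel₀ hvne, mul_one]
  have hσ'sqH : μ[(fun ω => sigP μ mV mH σ ω ^ 2)|mH] =ᵐ[μ]
      fun ω => (Tfun μ mV mH σ ω)⁻¹ := by
    have htow := (condExp_condExp_of_le hHV hV
      (f := fun ω => sigP μ mV mH σ ω ^ 2) (μ := μ)).symm
    have hc1 := condExp_congr_ae (m := mH) hσ'sqV
    have hint : Integrable (fun ω => ((Tfun μ mV mH σ ω)⁻¹) ^ 2 * Wfun μ mV σ ω) μ :=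
      integrable_condExp.congr hσ'sqV
    have hφ : StronglyMeasurable[mH] (fun ω => ((Tfun μ mV mH σ ω)⁻¹) ^ 2) :=
      (hTm.measurable.inv.pow_const 2).stronglyMeasurable
    have h2 := condexpMulLeft hφ hint hWint
    refine htow.trans (hc1.trans (h2.trans ?_))
    filter_upwards [hTpos] with ω hT
    have hμW : (μ[Wfun μ mV σ|mH]) ω = Tfun μ mV mH σ ω := rfl
    rw [hμW]
    have hTne : Tfun μ mV mH σ ω ≠ 0 := ne_of_gt hT
    set t := Tfun μ mV mH σ ω
    calc t⁻¹ ^ 2 * t = t⁻¹ * (t⁻¹ * t) := by ring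
      _ = t⁻¹ := by rw [inv_mul_cancel₀ hTne, mul_one]
  have hσ'sqVm : μ[(fun ω => sigP μ mV mH σ ω ^ 2)|mVm] =ᵐ[μ] Tbul μ mV mH mVm σ :=
    (condExp_condExp_of_le hVmH hH0).symm.trans (condExp_congr_ae hσ'sqH)
  -- conditional second moment of ε
  have hεsqVm : μ[(fun ω => epsFun μ mV mH σ Q ω ^ 2)|mVm] =ᵐ[μ]
      fun ω => Tbul μ mV mH mVm σ ω + (μ[(fun ω' => Q ω' ^ 2)|mVm]) ω := by
    have hpt : ∀ ω, epsFun μ mV mH σ Q ω ^ 2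
        = sigP μ mV mH σ ω ^ 2 + (2 * (Q ω * sigP μ mV mH σ ω) + Q ω ^ 2) := by
      intro ω; simp only [epsFun, sigP]; ring
    have h1 : μ[(fun ω => epsFun μ mV mH σ Q ω ^ 2)|mVm] =ᵐ[μ]
        μ[(fun ω => sigP μ mV mH σ ω ^ 2
          + (2 * (Q ω * sigP μ mV mH σ ω) + Q ω ^ 2))|mVm] :=
      condExp_congr_ae (Filter.Eventually.of_forall hpt)
    have i2 : Integrable (fun ω => 2 * (Q ω * sigP μ mV mH σ ω)) μ := iQσ'.const_mul 2
    have ib : Integrable (fun ω => 2 * (Q ω * sigP μ mV mH σ ω) + Q ω ^ 2) μ := i2.add iQsq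
    have h2 := condexpAddPt (m := mVm) iσ'sq ib
    have h3 := condexpAddPt (m := mVm) i2 iQsq
    have h4 : μ[(fun ω => 2 * (Q ω * sigP μ mV mH σ ω))|mVm] =ᵐ[μ] 0 :=
      condexpMulZero (φ := fun _ : Ω => (2:ℝ)) stronglyMeasurable_const i2 iQσ' hQσ'Vm
    filter_upwards [h1, h2, h3, h4, hσ'sqVm] with ω e1 e2 e3 e4 e5
    simp only [Pi.zero_apply] at e4
    rw [e1, e2, e3, e4, e5]
    ring
  -- ===== the coefficient e = E[hQ|𝒱₋]·W• and related L² facts =====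
  have ih : Integrable h μ := hh2.integrable one_le_two
  have hem : StronglyMeasurable[mVm] (eCoef μ mV mH mVm σ Q h) :=
    (stronglyMeasurable_condExp.measurable.mul hWbm).stronglyMeasurable
  have hμhH2 : MemLp (μ[h|mH]) 2 μ := memL2Condexp hH0 hh2
  have hμhVm2 : MemLp (μ[h|mVm]) 2 μ := memL2Condexp hVm0 hh2
  have heε2 : MemLp (fun ω => eCoef μ mV mH mVm σ Q h ω * epsFun μ mV mH σ Q ω) 2 μ := by
    have h1 : MemLp (fun ω => (μ[h|mH]) ω - (μ[h|mVm]) ω) 2 μ := hμhH2.sub hμhVm2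
    refine (h1.sub hprojL2).ae_eq (Filter.Eventually.of_forall fun ω => ?_)
    show ((fun ω => (μ[h|mH]) ω - (μ[h|mVm]) ω) ω) - projGamma4 μ mV mH mVm σ Q h ω = _
    simp only [projGamma4, eCoef]
    ring
  have hsplit2 := gammaSplit (A := fun ω => eCoef μ mV mH mVm σ Q h ω * Q ω)
    (c := fun ω => -eCoef μ mV mH mVm σ Q h ω) hH0 hσ'2 hσ'H
    ((hem.mono hVmH).mul hQmeas) (hem.mono hVmH).neg
    (heε2.ae_eq (Filter.Eventually.of_forall fun ω => by
      show eCoef μ mV mH mVm σ Q h ω * epsFun μ mV mH σ Q ω = _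
      simp only [epsFun, sigP]
      ring))
  have heQ2 : MemLp (fun ω => eCoef μ mV mH mVm σ Q h ω * Q ω) 2 μ := hsplit2.1
  have heσ'2 : MemLp (fun ω => eCoef μ mV mH mVm σ Q h ω * sigP μ mV mH σ ω) 2 μ := by
    refine hsplit2.2.neg.ae_eq (Filter.Eventually.of_forall fun ω => ?_)
    simp only [Pi.neg_apply]
    ring
  -- ===== the candidate A₀ =====
  have hA0m : StronglyMeasurable[mH] (A0fun μ mV mH mVm σ Q h) :=
    (stronglyMeasurable_condExp.sub (stronglyMeasurable_condExp.mono hVmH)).sub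
      ((hem.mono hVmH).mul hQmeas)
  have hA02 : MemLp (A0fun μ mV mH mVm σ Q h) 2 μ :=
    ((hμhH2.sub hμhVm2).sub heQ2).ae_eq (Filter.Eventually.of_forall fun ω => rfl)
  have iA0 : Integrable (A0fun μ mV mH mVm σ Q h) μ := hA02.integrable one_le_two
  have hA0Vm : μ[A0fun μ mV mH mVm σ Q h|mVm] =ᵐ[μ] 0 := by
    have if1 : Integrable (fun ω => (μ[h|mH]) ω - (μ[h|mVm]) ω) μ :=
      integrable_condExp.sub integrable_condExp
    have h1 : μ[A0fun μ mV mH mVm σ Q h|mVm] =ᵐ[μ]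
        fun ω => (μ[(fun ω' => (μ[h|mH]) ω' - (μ[h|mVm]) ω')|mVm]) ω
          - (μ[(fun ω' => eCoef μ mV mH mVm σ Q h ω' * Q ω')|mVm]) ω :=
      condexpSubPt if1 (heQ2.integrable one_le_two)
    have h2 := condexpSubPt (m := mVm) (μ := μ) integrable_condExp integrable_condExp
      (f := μ[h|mH]) (g := μ[h|mVm])
    have h3 := condExp_condExp_of_le hVmH hH0 (f := h) (μ := μ)
    have h4 := condExp_condExp_of_le (le_refl mVm) hVm0 (f := h) (μ := μ)
    have h5 : μ[(fun ω => eCoef μ mV mH mVm σ Q h ω * Q ω)|mVm] =ᵐ[μ] 0 :=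
      condexpMulZero hem (heQ2.integrable one_le_two) iQ hQcond
    filter_upwards [h1, h2, h3, h4, h5] with ω e1 e2 e3 e4 e5
    simp only [Pi.zero_apply] at e5 ⊢
    rw [e1, e2, e3, e4, e5]
    ring
  -- ===== conditional expectation of Q·A₀ =====
  have iQμhH : Integrable (fun ω => Q ω * (μ[h|mH]) ω) μ := intMulL2' hQ2 hμhH2
  have iQμhVm : Integrable (fun ω => Q ω * (μ[h|mVm]) ω) μ := intMulL2' hQ2 hμhVm2
  have iQeQ : Integrable (fun ω => Q ω * (eCoef μ mV mH mVm σ Q h ω * Q ω)) μ :=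
    intMulL2' hQ2 heQ2
  have p1 : μ[(fun ω => Q ω * (μ[h|mH]) ω)|mVm] =ᵐ[μ] μ[(fun ω' => h ω' * Q ω')|mVm] := by
    have q0 : Integrable (fun ω => Q ω * h ω) μ :=
      hhQInt.congr (Filter.Eventually.of_forall fun ω => mul_comm (h ω) (Q ω))
    have q1 : μ[(fun ω => Q ω * h ω)|mH] =ᵐ[μ] fun ω => Q ω * (μ[h|mH]) ω :=
      condexpMulLeft hQmeas q0 ih
    have q3 : μ[μ[(fun ω => Q ω * h ω)|mH]|mVm] =ᵐ[μ] μ[(fun ω => Q ω * h ω)|mVm] :=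
      condExp_condExp_of_le hVmH hH0
    have q4 : μ[(fun ω => Q ω * h ω)|mVm] =ᵐ[μ] μ[(fun ω' => h ω' * Q ω')|mVm] :=
      condExp_congr_ae (Filter.Eventually.of_forall fun ω => mul_comm _ _)
    exact (condExp_congr_ae q1.symm).trans (q3.trans q4)
  have p2 : μ[(fun ω => Q ω * (μ[h|mVm]) ω)|mVm] =ᵐ[μ] 0 := by
    have q1 : μ[(fun ω => (μ[h|mVm]) ω * Q ω)|mVm] =ᵐ[μ] 0 :=
      condexpMulZero stronglyMeasurable_condExp
        (iQμhVm.congr (Filter.Eventually.of_forall fun ω => mul_comm _ _)) iQ hQcond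
    exact (condExp_congr_ae (Filter.Eventually.of_forall fun ω =>
      mul_comm (Q ω) ((μ[h|mVm]) ω))).trans q1
  have p3 : μ[(fun ω => Q ω * (eCoef μ mV mH mVm σ Q h ω * Q ω))|mVm] =ᵐ[μ]
      fun ω => eCoef μ mV mH mVm σ Q h ω * (μ[(fun ω' => Q ω' ^ 2)|mVm]) ω := by
    refine (condExp_congr_ae (Filter.Eventually.of_forall fun ω => ?_)).trans
      (condexpMulLeft hem (iQeQ.congr (Filter.Eventually.of_forall fun ω => by ring)) iQsq)
    show Q ω * (eCoef μ mV mH mVm σ Q h ω * Q ω) = eCoef μ mV mH mVm σ Q h ω * Q ω ^ 2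
    ring
  have iQA0 : Integrable (fun ω => Q ω * A0fun μ mV mH mVm σ Q h ω) μ :=
    intMulL2' hQ2 hA02
  have hQA0Vm : μ[(fun ω => Q ω * A0fun μ mV mH mVm σ Q h ω)|mVm] =ᵐ[μ]
      fun ω => (μ[(fun ω' => h ω' * Q ω')|mVm]) ω
        - eCoef μ mV mH mVm σ Q h ω * (μ[(fun ω' => Q ω' ^ 2)|mVm]) ω := by
    have i12 : Integrable (fun ω => Q ω * (μ[h|mH]) ω - Q ω * (μ[h|mVm]) ω) μ :=
      iQμhH.sub iQμhVm
    have d1 : μ[(fun ω => Q ω * A0fun μ mV mH mVm σ Q h ω)|mVm] =ᵐ[μ]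
        μ[(fun ω => (Q ω * (μ[h|mH]) ω - Q ω * (μ[h|mVm]) ω)
          - Q ω * (eCoef μ mV mH mVm σ Q h ω * Q ω))|mVm] :=
      condExp_congr_ae (Filter.Eventually.of_forall fun ω => by
        simp only [A0fun]; ring)
    have d2 := condexpSubPt (m := mVm) i12 iQeQ
    have d3 := condexpSubPt (m := mVm) iQμhH iQμhVm
    filter_upwards [d1, d2, d3, p1, p2, p3] with ω e1 e2 e3 e4 e5 e6
    simp only [Pi.zero_apply] at e5
    rw [e1, e2, e3, e4, e5, e6]
    ring
  -- ===== the key coefficient identity =====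
  have he_eq : (fun ω => (μ[(fun ω' => Q ω' * A0fun μ mV mH mVm σ Q h ω')|mVm]) ω
      * (Tbul μ mV mH mVm σ ω)⁻¹) =ᵐ[μ] eCoef μ mV mH mVm σ Q h := by
    filter_upwards [hQA0Vm, hεsqVm, hTbpos, hWbpos] with ω e1 e2 e3 e4
    rw [e1]
    have hwb : Wbul μ mV mH mVm σ Q ω
        = (Tbul μ mV mH mVm σ ω + (μ[(fun ω' => Q ω' ^ 2)|mVm]) ω)⁻¹ := by
      show ((μ[(fun ω' => epsFun μ mV mH σ Q ω' ^ 2)|mVm]) ω)⁻¹ = _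
      rw [e2]
    have htq : 0 < Tbul μ mV mH mVm σ ω + (μ[(fun ω' => Q ω' ^ 2)|mVm]) ω := by
      rw [← e2]; exact e4
    simp only [eCoef]
    rw [hwb]
    have h3 : Tbul μ mV mH mVm σ ω ≠ 0 := ne_of_gt e3
    have h4 : Tbul μ mV mH mVm σ ω + (μ[(fun ω' => Q ω' ^ 2)|mVm]) ω ≠ 0 := ne_of_gt htq
    field_simp
    ring
  -- ===== membership of the projection in Γ̃₄ =====
  have hproj_eq_g : projGamma4 μ mV mH mVm σ Q h =ᵐ[μ]
      (fun ω => A0fun μ mV mH mVm σ Q h ω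
        - (μ[(fun ω' => Q ω' * A0fun μ mV mH mVm σ Q h ω')|mVm]) ω
          * (Tbul μ mV mH mVm σ ω)⁻¹ * (Tfun μ mV mH σ ω)⁻¹ * Wfun μ mV σ ω * σ ω) := by
    filter_upwards [he_eq] with ω hc
    have h1 : projGamma4 μ mV mH mVm σ Q h ω
        = A0fun μ mV mH mVm σ Q h ω - eCoef μ mV mH mVm σ Q h ω * sigP μ mV mH σ ω := by
      simp only [projGamma4, A0fun, eCoef, epsFun, sigP]
      ring
    rw [h1, ← hc]
    simp only [sigP]
    ring
  -- ===== generic orthogonality facts for elements of Γ̃₄ =====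
  have main : ∀ f ∈ GammaTilde4 μ mV mH mVm σ Q,
      (∀ g : Ω → ℝ, StronglyMeasurable[mVm] g → MemLp g 2 μ → ∫ ω, g ω * f ω ∂μ = 0) ∧
      ∫ ω, (h ω - projGamma4 μ mV mH mVm σ Q h ω) * f ω ∂μ = 0 := by
    rintro f ⟨A, hAm, hAVm, hfeq, hfL2⟩
    obtain ⟨c, hcm, hc_def⟩ : ∃ c : Ω → ℝ, StronglyMeasurable[mVm] c ∧
        c = fun ω => (μ[(fun ω' => Q ω' * A ω')|mVm]) ω * (Tbul μ mV mH mVm σ ω)⁻¹ :=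
      ⟨_, (stronglyMeasurable_condExp.measurable.mul hTbm.measurable.inv).stronglyMeasurable,
        rfl⟩
    have hc_pt : ∀ ω, c ω = (μ[(fun ω' => Q ω' * A ω')|mVm]) ω
        * (Tbul μ mV mH mVm σ ω)⁻¹ := fun ω => by rw [hc_def]
    have hfpt : ∀ ω, f ω = A ω - c ω * sigP μ mV mH σ ω := by
      intro ω
      rw [hfeq, hc_pt ω]
      show A ω - _ = _
      simp only [sigP]
      ring
    have hfL2' : MemLp (fun ω => A ω - c ω * sigP μ mV mH σ ω) 2 μ :=
      hfL2.ae_eq (Filter.Eventually.of_forall hfpt)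
    obtain ⟨hA2, hcσ'2⟩ := gammaSplit hH0 hσ'2 hσ'H hAm (hcm.mono hVmH) hfL2'
    have iA : Integrable A μ := hA2.integrable one_le_two
    -- part (b): 𝒱₋-measurable functions are orthogonal to f
    have part_b : ∀ g : Ω → ℝ, StronglyMeasurable[mVm] g → MemLp g 2 μ →
        ∫ ω, g ω * f ω ∂μ = 0 := by
      intro g hgm hg2
      have i1 : Integrable (fun ω => g ω * A ω) μ := intMulL2' hg2 hA2
      have i2 : Integrable (fun ω => (g ω * c ω) * sigP μ mV mH σ ω) μ :=
        (intMulL2' hg2 hcσ'2).congr (Filter.Eventually.of_forall fun ω => by ring)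
      have hsplit : ∫ ω, g ω * f ω ∂μ = ∫ ω, g ω * A ω ∂μ
          - ∫ ω, (g ω * c ω) * sigP μ mV mH σ ω ∂μ := by
        rw [← integral_sub i1 i2]
        exact integral_congr_ae (Filter.Eventually.of_forall fun ω => by
          simp only [hfpt]; ring)
      have hgc : StronglyMeasurable[mVm] (fun ω => g ω * c ω) := hgm.mul hcm
      rw [hsplit, integralMulZero' hVm0 hgm i1 iA hAVm,
        integralMulZero' hVm0 hgc i2 iσ' hσ'Vm]
      ring
    refine ⟨part_b, ?_⟩
    -- T1 : h - E[h|ℋ] is orthogonal to f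
    have hhmhH2 : MemLp (fun ω => h ω - (μ[h|mH]) ω) 2 μ := hh2.sub hμhH2
    have hcondT1 : μ[(fun ω => h ω - (μ[h|mH]) ω)|mH] =ᵐ[μ] 0 := by
      have s1 := condexpSubPt (m := mH) ih integrable_condExp (f := h) (g := μ[h|mH])
      have s2 := condExp_condExp_of_le (le_refl mH) hH0 (f := h) (μ := μ)
      refine s1.trans ?_
      filter_upwards [s2] with ω e2
      simp only [Pi.zero_apply]
      rw [e2]
      ring
    have T1a : ∫ ω, A ω * (h ω - (μ[h|mH]) ω) ∂μ = 0 :=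
      integralMulZero' hH0 hAm (intMulL2' hA2 hhmhH2)
        (hhmhH2.integrable one_le_two) hcondT1
    have T1b : ∫ ω, h ω * (c ω * sigP μ mV mH σ ω) ∂μ = 0 := by
      have hφ : StronglyMeasurable[mV]
          (fun ω => h ω * c ω * (Tfun μ mV mH σ ω)⁻¹ * Wfun μ mV σ ω) :=
        (((hhmeas.measurable.mul (hcm.mono (hVmH.trans hHV)).measurable).mul
          ((hTm.mono hHV).measurable.inv)).mul hWmV).stronglyMeasurable
      have hint : Integrable
          (fun ω => h ω * c ω * (Tfun μ mV mH σ ω)⁻¹ * Wfun μ mV σ ω * σ ω) μ :=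
        (intMulL2' hh2 hcσ'2).congr (Filter.Eventually.of_forall fun ω => by
          simp only [sigP]; ring)
      have h0 := integralMulZero' hV hφ hint iσ hσcond
      rw [← h0]
      exact integral_congr_ae (Filter.Eventually.of_forall fun ω => by
        simp only [sigP]; ring)
    have T1c : ∫ ω, (μ[h|mH]) ω * (c ω * sigP μ mV mH σ ω) ∂μ = 0 := by
      have hφ : StronglyMeasurable[mH] (fun ω => (μ[h|mH]) ω * c ω) :=
        stronglyMeasurable_condExp.mul (hcm.mono hVmH)
      have hint : Integrable
          (fun ω => (μ[h|mH]) ω * c ω * sigP μ mV mH σ ω) μ :=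
        (intMulL2' hμhH2 hcσ'2).congr (Filter.Eventually.of_forall fun ω => by ring)
      have h0 := integralMulZero' hH0 hφ hint iσ' hσ'H
      rw [← h0]
      exact integral_congr_ae (Filter.Eventually.of_forall fun ω => by ring)
    have T1 : ∫ ω, (h ω - (μ[h|mH]) ω) * f ω ∂μ = 0 := by
      have i1 : Integrable (fun ω => (h ω - (μ[h|mH]) ω) * A ω) μ :=
        intMulL2' hhmhH2 hA2
      have i2 : Integrable (fun ω => (h ω - (μ[h|mH]) ω) * (c ω * sigP μ mV mH σ ω)) μ :=
        intMulL2' hhmhH2 hcσ'2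
      have i2a : Integrable (fun ω => h ω * (c ω * sigP μ mV mH σ ω)) μ :=
        intMulL2' hh2 hcσ'2
      have i2b : Integrable (fun ω => (μ[h|mH]) ω * (c ω * sigP μ mV mH σ ω)) μ :=
        intMulL2' hμhH2 hcσ'2
      have hsplit : ∫ ω, (h ω - (μ[h|mH]) ω) * f ω ∂μ
          = ∫ ω, (h ω - (μ[h|mH]) ω) * A ω ∂μ
            - ∫ ω, (h ω - (μ[h|mH]) ω) * (c ω * sigP μ mV mH σ ω) ∂μ := by
        rw [← integral_sub i1 i2]
        exact integral_congr_ae (Filter.Eventually.of_forall fun ω => by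
          simp only [hfpt]; ring)
      have h1 : ∫ ω, (h ω - (μ[h|mH]) ω) * A ω ∂μ = 0 := by
        rw [← T1a]
        exact integral_congr_ae (Filter.Eventually.of_forall fun ω => by ring)
      have h2 : ∫ ω, (h ω - (μ[h|mH]) ω) * (c ω * sigP μ mV mH σ ω) ∂μ = 0 := by
        have hs : ∫ ω, (h ω - (μ[h|mH]) ω) * (c ω * sigP μ mV mH σ ω) ∂μ
            = ∫ ω, h ω * (c ω * sigP μ mV mH σ ω) ∂μ
              - ∫ ω, (μ[h|mH]) ω * (c ω * sigP μ mV mH σ ω) ∂μ := by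
          rw [← integral_sub i2a i2b]
          exact integral_congr_ae (Filter.Eventually.of_forall fun ω => by ring)
        rw [hs, T1b, T1c]
        ring
      rw [hsplit, h1, h2]
      ring
    -- T2 : E[h|𝒱₋] is orthogonal to f
    have T2 : ∫ ω, (μ[h|mVm]) ω * f ω ∂μ = 0 :=
      part_b _ stronglyMeasurable_condExp hμhVm2
    -- T3 : e·ε is orthogonal to f
    have iεA : Integrable (fun ω => epsFun μ mV mH σ Q ω * A ω) μ := intMulL2' hε2 hA2
    have iεσ' : Integrable (fun ω => epsFun μ mV mH σ Q ω * sigP μ mV mH σ ω) μ :=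
      intMulL2' hε2 hσ'2
    have hεAVm : μ[(fun ω => epsFun μ mV mH σ Q ω * A ω)|mVm] =ᵐ[μ]
        μ[(fun ω' => Q ω' * A ω')|mVm] := by
      have a1 : μ[(fun ω => epsFun μ mV mH σ Q ω * A ω)|mVm] =ᵐ[μ]
          μ[(fun ω => sigP μ mV mH σ ω * A ω + Q ω * A ω)|mVm] :=
        condExp_congr_ae (Filter.Eventually.of_forall fun ω => by
          simp only [epsFun, sigP]; ring)
      have a2 := condexpAddPt (m := mVm) (intMulL2' hσ'2 hA2) (intMulL2' hQ2 hA2)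
      have a3 : μ[(fun ω => sigP μ mV mH σ ω * A ω)|mVm] =ᵐ[μ] 0 := by
        have b1 : μ[(fun ω => A ω * sigP μ mV mH σ ω)|mH] =ᵐ[μ] 0 :=
          condexpMulZero hAm
            ((intMulL2' hσ'2 hA2).congr (Filter.Eventually.of_forall fun ω => by ring))
            iσ' hσ'H
        have b2 : μ[(fun ω => sigP μ mV mH σ ω * A ω)|mH] =ᵐ[μ] 0 :=
          (condExp_congr_ae (Filter.Eventually.of_forall fun ω => mul_comm _ _)).trans b1
        exact towerZero hVmH hH0 b2
      filter_upwards [a1, a2, a3] with ω e1 e2 e3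
      simp only [Pi.zero_apply] at e3
      rw [e1, e2, e3]
      ring
    have hεσ'Vm : μ[(fun ω => epsFun μ mV mH σ Q ω * sigP μ mV mH σ ω)|mVm] =ᵐ[μ]
        Tbul μ mV mH mVm σ := by
      have a1 : μ[(fun ω => epsFun μ mV mH σ Q ω * sigP μ mV mH σ ω)|mVm] =ᵐ[μ]
          μ[(fun ω => sigP μ mV mH σ ω ^ 2 + Q ω * sigP μ mV mH σ ω)|mVm] :=
        condExp_congr_ae (Filter.Eventually.of_forall fun ω => by
          simp only [epsFun, sigP]; ring)
      have a2 := condexpAddPt (m := mVm) iσ'sq iQσ'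
      filter_upwards [a1, a2, hσ'sqVm, hQσ'Vm] with ω e1 e2 e3 e4
      simp only [Pi.zero_apply] at e4
      rw [e1, e2, e3, e4]
      ring
    have T3a : ∫ ω, (eCoef μ mV mH mVm σ Q h ω * epsFun μ mV mH σ Q ω) * A ω ∂μ
        = ∫ ω, eCoef μ mV mH mVm σ Q h ω * (μ[(fun ω' => Q ω' * A ω')|mVm]) ω ∂μ := by
      have hint : Integrable
          (fun ω => eCoef μ mV mH mVm σ Q h ω * (epsFun μ mV mH σ Q ω * A ω)) μ :=
        (intMulL2' heε2 hA2).congr (Filter.Eventually.of_forall fun ω => by ring)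
      have hmc := integralMulCondexp hVm0 hem hint iεA
      calc ∫ ω, (eCoef μ mV mH mVm σ Q h ω * epsFun μ mV mH σ Q ω) * A ω ∂μ
          = ∫ ω, eCoef μ mV mH mVm σ Q h ω * (epsFun μ mV mH σ Q ω * A ω) ∂μ :=
            integral_congr_ae (Filter.Eventually.of_forall fun ω => by ring)
        _ = ∫ ω, eCoef μ mV mH mVm σ Q h ω
              * (μ[(fun ω => epsFun μ mV mH σ Q ω * A ω)|mVm]) ω ∂μ := hmc
        _ = ∫ ω, eCoef μ mV mH mVm σ Q h ω * (μ[(fun ω' => Q ω' * A ω')|mVm]) ω ∂μ := by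
            refine integral_congr_ae ?_
            filter_upwards [hεAVm] with ω e1
            rw [e1]
    have T3b : ∫ ω, (eCoef μ mV mH mVm σ Q h ω * epsFun μ mV mH σ Q ω)
          * (c ω * sigP μ mV mH σ ω) ∂μ
        = ∫ ω, (eCoef μ mV mH mVm σ Q h ω * c ω) * Tbul μ mV mH mVm σ ω ∂μ := by
      have hint : Integrable (fun ω => (eCoef μ mV mH mVm σ Q h ω * c ω)
          * (epsFun μ mV mH σ Q ω * sigP μ mV mH σ ω)) μ :=
        (intMulL2' heε2 hcσ'2).congr (Filter.Eventually.of_forall fun ω => by ring)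
      have hec : StronglyMeasurable[mVm] (fun ω => eCoef μ mV mH mVm σ Q h ω * c ω) :=
        hem.mul hcm
      have hmc := integralMulCondexp hVm0 hec hint iεσ'
      calc ∫ ω, (eCoef μ mV mH mVm σ Q h ω * epsFun μ mV mH σ Q ω)
            * (c ω * sigP μ mV mH σ ω) ∂μ
          = ∫ ω, (eCoef μ mV mH mVm σ Q h ω * c ω)
              * (epsFun μ mV mH σ Q ω * sigP μ mV mH σ ω) ∂μ :=
            integral_congr_ae (Filter.Eventually.of_forall fun ω => by ring)
        _ = ∫ ω, (eCoef μ mV mH mVm σ Q h ω * c ω)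
              * (μ[(fun ω => epsFun μ mV mH σ Q ω * sigP μ mV mH σ ω)|mVm]) ω ∂μ := hmc
        _ = ∫ ω, (eCoef μ mV mH mVm σ Q h ω * c ω) * Tbul μ mV mH mVm σ ω ∂μ := by
            refine integral_congr_ae ?_
            filter_upwards [hεσ'Vm] with ω e1
            rw [e1]
    have T3 : ∫ ω, (eCoef μ mV mH mVm σ Q h ω * epsFun μ mV mH σ Q ω) * f ω ∂μ = 0 := by
      have i1 : Integrable (fun ω =>
          (eCoef μ mV mH mVm σ Q h ω * epsFun μ mV mH σ Q ω) * A ω) μ :=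
        intMulL2' heε2 hA2
      have i2 : Integrable (fun ω => (eCoef μ mV mH mVm σ Q h ω * epsFun μ mV mH σ Q ω)
          * (c ω * sigP μ mV mH σ ω)) μ := intMulL2' heε2 hcσ'2
      have hsplit : ∫ ω, (eCoef μ mV mH mVm σ Q h ω * epsFun μ mV mH σ Q ω) * f ω ∂μ
          = ∫ ω, (eCoef μ mV mH mVm σ Q h ω * epsFun μ mV mH σ Q ω) * A ω ∂μ
            - ∫ ω, (eCoef μ mV mH mVm σ Q h ω * epsFun μ mV mH σ Q ω)
                * (c ω * sigP μ mV mH σ ω) ∂μ := by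
        rw [← integral_sub i1 i2]
        exact integral_congr_ae (Filter.Eventually.of_forall fun ω => by
          simp only [hfpt]; ring)
      rw [hsplit, T3a, T3b]
      have hae : (fun ω => eCoef μ mV mH mVm σ Q h ω * (μ[(fun ω' => Q ω' * A ω')|mVm]) ω)
          =ᵐ[μ] fun ω => (eCoef μ mV mH mVm σ Q h ω * c ω) * Tbul μ mV mH mVm σ ω := by
        filter_upwards [hTbpos] with ω ht
        rw [hc_pt ω, mul_assoc, mul_assoc, inv_mul_cancel₀ (ne_of_gt ht), mul_one]
      rw [integral_congr_ae hae]
      ring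
    -- combine T1, T2, T3
    have i1 : Integrable (fun ω => (h ω - (μ[h|mH]) ω) * f ω) μ := intMulL2' hhmhH2 hfL2
    have i2 : Integrable (fun ω => (μ[h|mVm]) ω * f ω) μ := intMulL2' hμhVm2 hfL2
    have i3 : Integrable (fun ω =>
        (eCoef μ mV mH mVm σ Q h ω * epsFun μ mV mH σ Q ω) * f ω) μ :=
      intMulL2' heε2 hfL2
    have hdec : ∫ ω, (h ω - projGamma4 μ mV mH mVm σ Q h ω) * f ω ∂μ
        = ∫ ω, ((h ω - (μ[h|mH]) ω) * f ω + ((μ[h|mVm]) ω * f ω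
          + (eCoef μ mV mH mVm σ Q h ω * epsFun μ mV mH σ Q ω) * f ω)) ∂μ := by
      refine integral_congr_ae (Filter.Eventually.of_forall fun ω => ?_)
      simp only [projGamma4, eCoef, epsFun]
      ring
    have i23 : Integrable (fun ω => (μ[h|mVm]) ω * f ω
        + eCoef μ mV mH mVm σ Q h ω * epsFun μ mV mH σ Q ω * f ω) μ := i2.add i3
    rw [hdec, integral_add i1 i23, integral_add i2 i3, T1, T2, T3]
    ring
  refine ⟨?_, fun f hf => (main f hf).2, fun h' hm' h2' f hf => (main f hf).1 h' hm' h2'⟩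
  refine ⟨_, ⟨A0fun μ mV mH mVm σ Q h, hA0m, hA0Vm, rfl, ?_⟩, hproj_eq_g⟩
  exact hprojL2.ae_eq hproj_eq_g
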